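/- Let X be a topological ℂ-vector space of complex-valued functions on the open disc D(0,r) ⊆ ℂ containing all polynomial functions, such that (i) for each w with |w| < r the evaluation map f ↦ f(w) is continuous on X, and (ii) polynomial functions are dense in X. Let F : X → ℂ be a continuous linear functional with F(1) = 1 and F((z − α)^n) ≠ 0 for all n ≥ 1 and all α with |α| ≥ r. Then there exists w with |w| < r such that F(f) = f(w) for all f ∈ X. -/

import Mathlib

open Finset in
private lemma multiset_newton (s : Multiset ℂ) (k : ℕ) (hk : 0 < k) :
    (s.map (· ^ k)).sum = (-1) ^ (k + 1) * k * s.esymm k -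
      ∑ a ∈ Finset.HasAntidiagonal.antidiagonal k with a.1 ∈ Set.Ioo 0 k,
        (-1) ^ a.1 * s.esymm a.1 * (s.map (· ^ a.2)).sum := by
  obtain ⟨l, rfl⟩ : ∃ l : List ℂ, (l : Multiset ℂ) = s := ⟨s.toList, s.coe_toList⟩
  have huniv : (Finset.univ : Finset (Fin l.length)).val.map l.get = (l : Multiset ℂ) := by
    rw [Fin.univ_def]
    exact congrArg _ (List.map_get_finRange l)
  have hes : ∀ j, MvPolynomial.aeval l.get (MvPolynomial.esymm (Fin l.length) ℂ j)
      = Multiset.esymm (↑l) j := by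
    intro j
    rw [MvPolynomial.aeval_esymm_eq_multiset_esymm, huniv]
  have hps : ∀ j, MvPolynomial.aeval l.get (MvPolynomial.psum (Fin l.length) ℂ j)
      = ((↑l : Multiset ℂ).map (· ^ j)).sum := by
    intro j
    rw [MvPolynomial.psum, map_sum]
    simp only [map_pow, MvPolynomial.aeval_X]
    rw [Finset.sum, ← huniv, Multiset.map_map]
    rfl
  have key := congrArg (MvPolynomial.aeval l.get)
    (MvPolynomial.psum_eq_mul_esymm_sub_sum (Fin l.length) ℂ k hk)
  simpa [map_sub, map_mul, map_pow, map_sum, hes, hps] using key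


open Finset in
private lemma esymm_replicate (n : ℕ) (w : ℂ) (i : ℕ) :
    (Multiset.replicate n w).esymm i = (n.choose i : ℂ) * w ^ i := by
  rw [Multiset.esymm]
  have : ((Multiset.replicate n w).powersetCard i).map Multiset.prod
      = Multiset.replicate (n.choose i) (w ^ i) := by
    rw [Multiset.eq_replicate]
    constructor
    · simp [Multiset.card_powersetCard]
    · intro b hb
      obtain ⟨t, ht, rfl⟩ := Multiset.mem_map.mp hb
      obtain ⟨hle, hcard⟩ := (Multiset.mem_powersetCard).mp ht
      have : t = Multiset.replicate i w := by
        rw [← hcard]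
        exact Multiset.eq_replicate_card.mpr
          fun x hx => Multiset.eq_of_mem_replicate (Multiset.mem_of_le hle hx)
      rw [this, Multiset.prod_replicate]
  rw [this, Multiset.sum_replicate, nsmul_eq_mul]

private lemma psum_norm_le (s : Multiset ℂ) (B : ℝ) (hB : 0 ≤ B)
    (h : ∀ x ∈ s, ‖x‖ ≤ B) (m : ℕ) :
    ‖(s.map (· ^ m)).sum‖ ≤ (Multiset.card s) * B ^ m := by
  induction s using Multiset.induction with
  | empty => simp
  | cons a s ih =>
    rw [Multiset.map_cons, Multiset.sum_cons, Multiset.card_cons]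
    have h1 : ‖a ^ m‖ ≤ B ^ m := by
      rw [norm_pow]
      exact pow_le_pow_left₀ (norm_nonneg a) (h a (Multiset.mem_cons_self a s)) m
    have h2 := ih (fun x hx => h x (Multiset.mem_cons_of_mem hx))
    calc ‖a ^ m + (s.map (· ^ m)).sum‖ ≤ ‖a ^ m‖ + ‖(s.map (· ^ m)).sum‖ := norm_add_le _ _
      _ ≤ B ^ m + (Multiset.card s) * B ^ m := add_le_add h1 h2
      _ = ((Multiset.card s + 1 : ℕ)) * B ^ m := by push_cast; ring


private lemma psum_congr (s t : Multiset ℂ) (hcard : Multiset.card s = Multiset.card t)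
    (m : ℕ) (he : ∀ i, 0 < i → i ≤ m → s.esymm i = t.esymm i) :
    ∀ j, j ≤ m → (s.map (· ^ j)).sum = (t.map (· ^ j)).sum := by
  intro j
  induction j using Nat.strong_induction_on with
  | _ j ih =>
    intro hj
    rcases Nat.eq_zero_or_pos j with h0 | h0
    · subst h0
      simp only [pow_zero, Multiset.map_const', Multiset.sum_replicate, hcard]
    · rw [multiset_newton s j h0, multiset_newton t j h0, he j h0 hj]
      congr 1
      refine Finset.sum_congr rfl fun a ha => ?_
      simp only [Finset.mem_filter, Finset.HasAntidiagonal.mem_antidiagonal, Set.mem_Ioo] at ha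
      have h1 : a.1 ≤ m := le_trans (le_of_lt ha.2.2) hj
      have h2 : a.2 < j := by omega
      have h3 : a.2 ≤ m := by omega
      rw [he a.1 ha.2.1 h1, ih a.2 h2 h3]


open Polynomial in
private lemma coeff_sum_C_mul_X_pow (f : ℕ → ℂ) (n i : ℕ) :
    (∑ j ∈ Finset.range (n+1), C (f j) * X ^ j).coeff i
      = if i ≤ n then f i else 0 := by
  rw [Polynomial.finset_sum_coeff]
  simp only [coeff_C_mul, coeff_X_pow, mul_ite, mul_one, mul_zero]
  rw [Finset.sum_ite_eq (Finset.range (n+1)) i f]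
  simp [Nat.lt_succ_iff]

private lemma neg_one_pow_sub (n j : ℕ) (h : j ≤ n) : ((-1 : ℂ)) ^ (n - j) = (-1) ^ (n + j) := by
  rw [show n + j = (n - j) + 2 * j by omega, pow_add, pow_mul]
  simp

open Polynomial in
private lemma gkz_poly (r : ℝ) (hr : 0 < r) (φ : Polynomial ℂ →ₗ[ℂ] ℂ) (hφ1 : φ 1 = 1)
    (hφ : ∀ n : ℕ, 1 ≤ n → ∀ α : ℂ, r ≤ ‖α‖ → φ ((X - C α) ^ n) ≠ 0) :
    ‖φ X‖ < r ∧ ∀ p : Polynomial ℂ, φ p = p.eval (φ X) := by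
  set c : ℕ → ℂ := fun k => φ (X ^ k) with hc
  set w : ℂ := φ X with hw
  have hc0 : c 0 = 1 := by simp [hc, hφ1]
  have hc1 : c 1 = w := by simp [hc, hw]
  have hwr : ‖w‖ < r := by
    by_contra hge
    push_neg at hge
    apply hφ 1 le_rfl w hge
    have hCw : (C w : ℂ[X]) = w • 1 := by rw [smul_eq_C_mul, mul_one]
    rw [pow_one, map_sub, hCw, map_smul, hφ1, smul_eq_mul, mul_one, ← hw, sub_self]
  set Q : ℕ → Polynomial ℂ := fun n => ∑ j ∈ Finset.range (n+1),
      C ((n.choose j : ℂ) * c (n - j) * (-1) ^ j) * X ^ j with hQ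
  have hQeval : ∀ (n : ℕ) (α : ℂ), (Q n).eval α = φ ((X - C α) ^ n) := by
    intro n α
    have expand : ∀ m : ℕ, ((-1:ℂ[X]) ^ (m + n) * X ^ m * C α ^ (n - m) * (n.choose m : ℂ[X]))
        = ((-1:ℂ) ^ (m+n) * α ^ (n-m) * (n.choose m : ℂ)) • (X ^ m : ℂ[X]) := by
      intro m
      rw [smul_eq_C_mul]
      simp only [map_mul, map_pow, map_neg, map_one, map_natCast]
      ring
    rw [sub_pow]
    simp only [expand]
    rw [map_sum]
    simp only [map_smul, smul_eq_mul]
    have : (Q n).eval α = ∑ j ∈ Finset.range (n+1),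
        (n.choose j : ℂ) * c (n - j) * (-1) ^ j * α ^ j := by
      simp [hQ, eval_finset_sum]
    rw [this, ← Finset.sum_range_reflect]
    refine Finset.sum_congr rfl fun m hm => ?_
    rw [Finset.mem_range, Nat.lt_succ_iff] at hm
    rw [Nat.add_sub_cancel]
    rw [Nat.choose_symm hm, show n - (n - m) = m by omega, neg_one_pow_sub n m hm]
    rw [show n + m = m + n by omega]
    ring
  have hQcoeff : ∀ n i, (Q n).coeff i
      = if i ≤ n then (n.choose i : ℂ) * c (n - i) * (-1) ^ i else 0 := by
    intro n i
    exact coeff_sum_C_mul_X_pow (fun j => (n.choose j : ℂ) * c (n - j) * (-1) ^ j) n i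
  have hQcoeffn : ∀ n, (Q n).coeff n = (-1) ^ n := by
    intro n
    rw [hQcoeff n n, if_pos le_rfl, Nat.sub_self, hc0, Nat.choose_self]
    simp
  have hQdeg : ∀ n, (Q n).natDegree = n := by
    intro n
    refine le_antisymm ?_ ?_
    · refine Polynomial.natDegree_le_iff_coeff_eq_zero.mpr fun m hm => ?_
      rw [hQcoeff, if_neg (by omega)]
    · refine Polynomial.le_natDegree_of_ne_zero ?_
      rw [hQcoeffn]
      exact pow_ne_zero _ (by norm_num)
  have hQne : ∀ n, Q n ≠ 0 := by
    intro n h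
    have := hQcoeffn n
    rw [h, Polynomial.coeff_zero] at this
    exact (pow_ne_zero n (by norm_num : (-1:ℂ) ≠ 0)) this.symm
  have hQlead : ∀ n, (Q n).leadingCoeff = (-1) ^ n := by
    intro n
    rw [Polynomial.leadingCoeff, hQdeg, hQcoeffn]
  have hroots : ∀ n, Multiset.card (Q n).roots = n := by
    intro n
    rw [splits_iff_card_roots.mp (IsAlgClosed.splits (Q n)), hQdeg]
  have hrootslt : ∀ n, 1 ≤ n → ∀ ρ ∈ (Q n).roots, ‖ρ‖ < r := by
    intro n hn ρ hρ
    by_contra hge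
    push_neg at hge
    apply hφ n hn ρ hge
    rw [← hQeval]
    exact (Polynomial.mem_roots (hQne n)).mp hρ
  have hesymmQ : ∀ n i, i ≤ n → (Q n).roots.esymm i = (n.choose i : ℂ) * c i := by
    intro n i hi
    have key := Polynomial.coeff_eq_esymm_roots_of_card (p := Q n)
      (by rw [hroots, hQdeg]) (k := n - i) (by rw [hQdeg]; omega)
    rw [hQdeg, hQlead, hQcoeff, if_pos (by omega), show n - (n - i) = i by omega,
      Nat.choose_symm hi] at key
    have hne : ((-1:ℂ)) ^ n * (-1) ^ i ≠ 0 := by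
      apply mul_ne_zero <;> exact pow_ne_zero _ (by norm_num)
    apply mul_left_cancel₀ hne
    rw [← mul_assoc, ← key, neg_one_pow_sub n i hi]
    ring
  have hcm : ∀ m, c m = w ^ m := by
    intro m
    induction m using Nat.strong_induction_on with
    | _ m ih =>
      match m, ih with
      | 0, _ => exact hc0
      | 1, _ => simpa using hc1
      | (M+2), ih =>
        set m := M + 2 with hmdef
        have hm2 : 2 ≤ m := by omega
        set d := ‖c m - w ^ m‖ with hd
        have hkey : ∀ t : ℕ, d * ((t:ℝ)+1)^2
            ≤ 2 * (m.factorial : ℝ) * (((m + t : ℕ)) : ℝ) * r ^ m := by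
          intro t
          set n := m + t with hn
          have hmn : m ≤ n := by omega
          set R := (Q n).roots with hR
          set S := Multiset.replicate n w with hS
          have hcard : Multiset.card R = Multiset.card S := by
            rw [hroots, hS, Multiset.card_replicate]
          have he : ∀ i, 0 < i → i ≤ m - 1 → R.esymm i = S.esymm i := by
            intro i hi0 hi
            rw [hesymmQ n i (by omega), esymm_replicate, ih i (by omega)]
          have hpsum := psum_congr R S hcard (m-1) he
          have hdiff : (R.map (· ^ m)).sum - (S.map (· ^ m)).sum
              = (-1) ^ (m+1) * m * ((n.choose m : ℂ) * (c m - w ^ m)) := by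
            rw [multiset_newton R m (by omega), multiset_newton S m (by omega)]
            have hsum : (∑ a ∈ Finset.HasAntidiagonal.antidiagonal m with a.1 ∈ Set.Ioo 0 m,
                  (-1:ℂ) ^ a.1 * R.esymm a.1 * (R.map (· ^ a.2)).sum)
                = ∑ a ∈ Finset.HasAntidiagonal.antidiagonal m with a.1 ∈ Set.Ioo 0 m,
                  (-1:ℂ) ^ a.1 * S.esymm a.1 * (S.map (· ^ a.2)).sum := by
              refine Finset.sum_congr rfl fun a ha => ?_
              simp only [Finset.mem_filter, Finset.HasAntidiagonal.mem_antidiagonal, Set.mem_Ioo] at ha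
              rw [he a.1 ha.2.1 (by omega), hpsum a.2 (by omega)]
            rw [hsum, hesymmQ n m hmn, esymm_replicate]
            ring
          have hnormR : ‖(R.map (· ^ m)).sum‖ ≤ (n:ℝ) * r ^ m := by
            have := psum_norm_le R r hr.le
              (fun x hx => le_of_lt (hrootslt n (by omega) x hx)) m
            rwa [hR, hroots] at this
          have hnormS : ‖(S.map (· ^ m)).sum‖ ≤ (n:ℝ) * r ^ m := by
            have := psum_norm_le S r hr.le
              (fun x hx => by
                have hx' : x ∈ Multiset.replicate n w := hx
                rw [Multiset.eq_of_mem_replicate hx']; exact hwr.le) m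
            rwa [hS, Multiset.card_replicate] at this
          have h1 : ‖(-1:ℂ) ^ (m+1) * m * ((n.choose m : ℂ) * (c m - w ^ m))‖
              = (m:ℝ) * (n.choose m : ℝ) * d := by
            simp only [norm_mul, norm_pow, norm_neg, norm_one, one_pow, one_mul,
              Complex.norm_natCast]
            rw [hd]
            ring
          have hnorm1 : (m : ℝ) * (n.choose m : ℝ) * d ≤ 2 * (n:ℝ) * r ^ m := by
            rw [← h1, ← hdiff]
            calc ‖(R.map (· ^ m)).sum - (S.map (· ^ m)).sum‖
                ≤ ‖(R.map (· ^ m)).sum‖ + ‖(S.map (· ^ m)).sum‖ := norm_sub_le _ _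
              _ ≤ (n:ℝ) * r ^ m + (n:ℝ) * r ^ m := add_le_add hnormR hnormS
              _ = 2 * (n:ℝ) * r ^ m := by ring
          have hcomb : ((t:ℝ)+1)^2 ≤ (m.factorial : ℝ) * (n.choose m : ℝ) := by
            have h2 : (t+1)^2 ≤ (t+1)^m := Nat.pow_le_pow_right (by omega) hm2
            have h3 : (t+1)^m ≤ n.descFactorial m := by
              have h4 := Nat.pow_sub_le_descFactorial n m
              rwa [show n + 1 - m = t + 1 by omega] at h4
            have h5 : (t+1)^2 ≤ m.factorial * n.choose m := by
              rw [← Nat.descFactorial_eq_factorial_mul_choose]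
              omega
            exact_mod_cast h5
          have hd0 : (0:ℝ) ≤ d := norm_nonneg _
          have hch0 : (0:ℝ) ≤ (n.choose m : ℝ) := Nat.cast_nonneg _
          have hrm0 : (0:ℝ) ≤ r ^ m := by positivity
          have hm2' : (2:ℝ) ≤ (m:ℝ) := by exact_mod_cast hm2
          nlinarith [mul_le_mul_of_nonneg_left hcomb hd0,
            mul_le_mul_of_nonneg_left hnorm1 (Nat.cast_nonneg m.factorial : (0:ℝ) ≤ m.factorial),
            mul_nonneg hch0 hd0, mul_nonneg (mul_nonneg hch0 hd0) hrm0,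
            mul_nonneg (Nat.cast_nonneg m.factorial : (0:ℝ) ≤ m.factorial) (mul_nonneg hch0 hd0)]
        have hC : ∀ t : ℕ, d ≤ (2 * (m.factorial:ℝ) * ((m:ℝ)+1) * r ^ m) / ((t:ℝ)+1) := by
          intro t
          have hpos : (0:ℝ) < (t:ℝ) + 1 := by positivity
          rw [le_div_iff₀ hpos]
          have hk := hkey t
          have hmt : (((m + t : ℕ)) : ℝ) ≤ ((m:ℝ)+1) * ((t:ℝ)+1) := by
            push_cast
            nlinarith [mul_nonneg (Nat.cast_nonneg m : (0:ℝ) ≤ m) (Nat.cast_nonneg t : (0:ℝ) ≤ t)]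
          refine le_of_mul_le_mul_right ?_ hpos
          calc d * ((t:ℝ)+1) * ((t:ℝ)+1) = d * ((t:ℝ)+1)^2 := by ring
            _ ≤ 2 * (m.factorial:ℝ) * ((m + t : ℕ) : ℝ) * r ^ m := hk
            _ ≤ 2 * (m.factorial:ℝ) * ((m:ℝ)+1) * r ^ m * ((t:ℝ)+1) := by
                nlinarith [mul_le_mul_of_nonneg_right hmt
                  (show (0:ℝ) ≤ 2*(m.factorial:ℝ)*r^m by positivity)]
        have htend : Filter.Tendsto
            (fun t : ℕ => (2 * (m.factorial:ℝ) * ((m:ℝ)+1) * r ^ m) / ((t:ℝ)+1))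
            Filter.atTop (nhds 0) := by
          have := (tendsto_const_div_atTop_nhds_zero_nat
            (2 * (m.factorial:ℝ) * ((m:ℝ)+1) * r ^ m)).comp (Filter.tendsto_add_atTop_nat 1)
          simpa [Function.comp_def, Nat.cast_add, Nat.cast_one] using this
        have hdle : d ≤ 0 := ge_of_tendsto' htend hC
        have : c m - w ^ m = 0 := by
          rw [← norm_eq_zero]
          exact le_antisymm hdle (norm_nonneg _)
        exact sub_eq_zero.mp this
  refine ⟨hwr, fun p => ?_⟩
  induction p using Polynomial.induction_on' with
  | add p q hp hq => rw [map_add, hp, hq, eval_add]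
  | monomial k a =>
    have : φ ((monomial k) a) = a * c k := by
      rw [← C_mul_X_pow_eq_monomial, ← smul_eq_C_mul, map_smul, smul_eq_mul]
    rw [this, hcm k, eval_monomial]




/-- GKZ theorem for topological vector spaces of functions on the disc D(0,r):
a continuous linear functional with F(1)=1 that is nonzero on the powers
(z-α)^n, |α| ≥ r, is a point evaluation at some point of the disc. -/
theorem gkz_metric_space (r : ℝ) (hr : 0 < r)
    (E : Type) [AddCommGroup E] [Module ℂ E] [TopologicalSpace E]
    (ι : E →ₗ[ℂ] ({z : ℂ // ‖z‖ < r} → ℂ)) (hι : Function.Injective ι)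
    (P : Polynomial ℂ →ₗ[ℂ] E)
    (hP : ∀ (p : Polynomial ℂ) (z : {z : ℂ // ‖z‖ < r}), ι (P p) z = p.eval z.1)
    (heval : ∀ w : {z : ℂ // ‖z‖ < r}, Continuous fun f : E => ι f w)
    (hdense : DenseRange P)
    (F : E →ₗ[ℂ] ℂ) (hFc : Continuous F) (hF1 : F (P 1) = 1)
    (hF : ∀ n : ℕ, 1 ≤ n → ∀ α : ℂ, r ≤ ‖α‖ →
      F (P ((Polynomial.X - Polynomial.C α) ^ n)) ≠ 0) :
    ∃ w : {z : ℂ // ‖z‖ < r}, ∀ f : E, F f = ι f w := by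
  set φ : Polynomial ℂ →ₗ[ℂ] ℂ := F.comp P with hφdef
  have hφ1 : φ 1 = 1 := hF1
  have hφ : ∀ n : ℕ, 1 ≤ n → ∀ α : ℂ, r ≤ ‖α‖ →
      φ ((Polynomial.X - Polynomial.C α) ^ n) ≠ 0 := hF
  obtain ⟨hwr, hev⟩ := gkz_poly r hr φ hφ1 hφ
  refine ⟨⟨φ Polynomial.X, hwr⟩, fun f => ?_⟩
  have hgoal : ⇑F = fun f : E => ι f ⟨φ Polynomial.X, hwr⟩ := by
    refine hdense.equalizer hFc (heval _) (funext fun p => ?_)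
    show F (P p) = ι (P p) ⟨φ Polynomial.X, hwr⟩
    rw [hP p ⟨φ Polynomial.X, hwr⟩]
    exact hev p
  exact congrFun hgoal f
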